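/- Let K be a field, let α, β ∈ K, and let e : ℤ → K satisfy e h ≠ 0 for all h and e(h−1)·e(h)²·e(h+1) = α²·e(h) − β for all h ∈ ℤ. Then there exists a constant γ ∈ K such that (e(h−1) + e(h+1))·e(h)² = γ·e(h) − α² for all h ∈ ℤ. (Explicitly, γ = e(h)·e(h+1) + α²/e(h) + e(h−1)·e(h) is independent of h.) -/

import Mathlib

theorem second_identity_from_first {K : Type*} [Field K] (α β : K) (e : ℤ → K)
    (hne : ∀ h : ℤ, e h ≠ 0)
    (he1 : ∀ h : ℤ, e (h - 1) * (e h) ^ 2 * e (h + 1) = α ^ 2 * e h - β) :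
    ∃ γ : K, ∀ h : ℤ, (e (h - 1) + e (h + 1)) * (e h) ^ 2 = γ * e h - α ^ 2 := by
  set g : ℤ → K := fun h => e h * e (h + 1) + α ^ 2 / e h + e (h - 1) * e h with hg
  have step : ∀ h : ℤ, g (h + 1) = g h := by
    intro h
    have h1 := he1 h
    have h2 := he1 (h + 1)
    simp only [hg, add_sub_cancel_right] at *
    have hh := hne h
    have hh1 := hne (h + 1)
    field_simp
    linear_combination h2 - h1
  have hconst : ∀ h : ℤ, g h = g 0 := by
    intro h
    induction h using Int.induction_on with
    | zero => rfl
    | succ k ih => rw [step k, ih]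
    | pred k ih => rw [← ih, ← step (-k - 1)]; ring_nf
  refine ⟨e 0 * e 1 + α ^ 2 / e 0 + e (-1) * e 0, fun h => ?_⟩
  have := hconst h
  simp only [hg] at this
  norm_num at this
  have hh := hne h
  have h0 := hne 0
  field_simp at this
  field_simp
  linear_combination this
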